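/- arXiv:0712.0332 — 2 statements merged into one kernel-verified Lean document; each statement's English description precedes it below -/
import Mathlib

section
/- Let ξ : [0,∞) → ℝ be continuous and suppose there are constants A > 0 and σ' < 1 with |ξ(t)| ≤ A + σ' t for all t ≥ 0. Let ψ(t,z) solve the strip Loewner equation ∂_t ψ(t,z) = coth((ψ(t,z) − ξ(t))/2), ψ(0,z) = z, and let L(t) be the set of z in the strip S_π for which the solution blows up by time t. Then L(∞) := ∪_{t≥0} L(t) is a bounded subset of S_π: there exist a, a' > 0 (depending on ξ) such that L(∞) ⊂ {x + iy : −a' < x < a, 0 < y < π}. -/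
open Complex
open scoped ENNReal

lemma sinh_eq_re_im (w : ℂ) : Complex.sinh w
    = (Real.sinh w.re * Real.cos w.im : ℝ) + (Real.cosh w.re * Real.sin w.im : ℝ) * I := by
  conv_lhs => rw [← re_add_im w]
  rw [Complex.sinh_add, Complex.sinh_mul_I, Complex.cosh_mul_I]
  push_cast
  ring

lemma cosh_eq_re_im (w : ℂ) : Complex.cosh w
    = (Real.cosh w.re * Real.cos w.im : ℝ) + (Real.sinh w.re * Real.sin w.im : ℝ) * I := by
  conv_lhs => rw [← re_add_im w]
  rw [Complex.cosh_add, Complex.sinh_mul_I, Complex.cosh_mul_I]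
  push_cast
  ring

lemma coth_re_formula (w : ℂ) (hw : 0 < w.re) :
    (Complex.cosh w / Complex.sinh w).re
      = Real.sinh w.re * Real.cosh w.re / (Real.sinh w.re ^ 2 + Real.sin w.im ^ 2) := by
  set u := w.re; set v := w.im
  have hN : (Real.sinh u * Real.cos v) ^ 2 + (Real.cosh u * Real.sin v) ^ 2
      = Real.sinh u ^ 2 + Real.sin v ^ 2 := by
    nlinarith [Real.sin_sq_add_cos_sq v, Real.cosh_sq u]
  have e1 : (Complex.cosh w).re = Real.cosh u * Real.cos v := by
    rw [cosh_eq_re_im w]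
    simp [Complex.sinh_ofReal_re, Complex.cosh_ofReal_re, Complex.sin_ofReal_re,
      Complex.cos_ofReal_re]
    rfl
  have e2 : (Complex.cosh w).im = Real.sinh u * Real.sin v := by
    rw [cosh_eq_re_im w]
    simp [Complex.sinh_ofReal_re, Complex.cosh_ofReal_re, Complex.sin_ofReal_re,
      Complex.cos_ofReal_re]
    rfl
  have e3 : (Complex.sinh w).re = Real.sinh u * Real.cos v := by
    rw [sinh_eq_re_im w]
    simp [Complex.sinh_ofReal_re, Complex.cosh_ofReal_re, Complex.sin_ofReal_re,
      Complex.cos_ofReal_re]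
    rfl
  have e4 : (Complex.sinh w).im = Real.cosh u * Real.sin v := by
    rw [sinh_eq_re_im w]
    simp [Complex.sinh_ofReal_re, Complex.cosh_ofReal_re, Complex.sin_ofReal_re,
      Complex.cos_ofReal_re]
    rfl
  rw [Complex.div_re, Complex.normSq_apply, e1, e2, e3, e4, ← add_div]
  have hnum : Real.cosh u * Real.cos v * (Real.sinh u * Real.cos v)
      + Real.sinh u * Real.sin v * (Real.cosh u * Real.sin v) = Real.sinh u * Real.cosh u := by
    linear_combination (Real.sinh u * Real.cosh u) * Real.sin_sq_add_cos_sq v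
  have hden : Real.sinh u * Real.cos v * (Real.sinh u * Real.cos v)
      + Real.cosh u * Real.sin v * (Real.cosh u * Real.sin v)
      = Real.sinh u ^ 2 + Real.sin v ^ 2 := by
    linear_combination (Real.sinh u ^ 2) * Real.sin_sq_add_cos_sq v
      + (Real.sin v ^ 2) * Real.cosh_sq u
  rw [hnum, hden]

lemma coth_re_ge {c' : ℝ} (hc : 0 < c') {w : ℂ} (hw : c' ≤ w.re) :
    1 - 2 * Real.exp (-(2 * c')) ≤ (Complex.cosh w / Complex.sinh w).re := by
  set u := w.re with hu
  set v := w.im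
  have hupos : 0 < u := hc.trans_le hw
  have hsinh : 0 < Real.sinh u := Real.sinh_pos_iff.2 hupos
  have hcosh : 0 < Real.cosh u := Real.cosh_pos u
  rw [coth_re_formula w hupos]
  have hden_pos : 0 < Real.sinh u ^ 2 + Real.sin v ^ 2 :=
    lt_add_of_pos_of_le (pow_pos hsinh 2) (sq_nonneg _)
  have hden_le : Real.sinh u ^ 2 + Real.sin v ^ 2 ≤ Real.cosh u ^ 2 := by
    have := Real.sin_sq_le_one v
    nlinarith [Real.cosh_sq u]
  have h1 : Real.sinh u * Real.cosh u / Real.cosh u ^ 2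
      ≤ Real.sinh u * Real.cosh u / (Real.sinh u ^ 2 + Real.sin v ^ 2) :=
    div_le_div_of_nonneg_left (by positivity) hden_pos hden_le
  have h2 : Real.sinh u * Real.cosh u / Real.cosh u ^ 2 = Real.sinh u / Real.cosh u := by
    rw [sq]; field_simp
  have h3 : 1 - 2 * Real.exp (-(2 * u)) ≤ Real.sinh u / Real.cosh u := by
    rw [le_div_iff₀ hcosh, Real.sinh_eq, Real.cosh_eq]
    have e1 : Real.exp (-(2 * u)) = Real.exp (-u) * Real.exp (-u) := by
      rw [← Real.exp_add]; ring_nf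
    have e2 : Real.exp u * Real.exp (-u) = 1 := by
      rw [← Real.exp_add]; simp
    nlinarith [Real.exp_pos u, Real.exp_pos (-u)]
  have h4 : Real.exp (-(2 * u)) ≤ Real.exp (-(2 * c')) :=
    Real.exp_le_exp.2 (by linarith)
  calc 1 - 2 * Real.exp (-(2 * c')) ≤ 1 - 2 * Real.exp (-(2 * u)) := by linarith
    _ ≤ Real.sinh u / Real.cosh u := h3
    _ = Real.sinh u * Real.cosh u / Real.cosh u ^ 2 := h2.symm
    _ ≤ _ := h1

/-- One-sided bound: points swallowed in finite time have real part bounded above. -/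
lemma strip_loewner_aux
    (ξ : ℝ → ℝ) (hξ : Continuous ξ) (A σ' : ℝ) (hA : 0 < A) (hσ : σ' < 1)
    (hbound : ∀ t : ℝ, 0 ≤ t → |ξ t| ≤ A + σ' * t)
    (ψ : ℂ → ℝ → ℂ) (Tmax : ℂ → ℝ≥0∞)
    (hpos : ∀ z, 0 < Tmax z)
    (hinit : ∀ z, ψ z 0 = z)
    (hode : ∀ z : ℂ, ∀ t : ℝ, 0 ≤ t → ENNReal.ofReal t < Tmax z →
      HasDerivAt (ψ z)
        (Complex.cosh ((ψ z t - (ξ t : ℂ)) / 2) /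
          Complex.sinh ((ψ z t - (ξ t : ℂ)) / 2)) t)
    (hblow : ∀ z : ℂ, Tmax z < ⊤ →
      Filter.Tendsto (fun t => ψ z t - (ξ t : ℂ))
        (nhdsWithin (Tmax z).toReal (Set.Iio (Tmax z).toReal)) (nhds 0)) :
    ∃ a : ℝ, 0 < a ∧ ∀ z : ℂ, Tmax z < ⊤ → z.re < a := by
  -- choose the constant c'
  set c' : ℝ := max 1 (Real.log (2 / (1 - σ')) / 2) with hc'def
  have hc'1 : (1 : ℝ) ≤ c' := le_max_left _ _
  have hc'pos : 0 < c' := lt_of_lt_of_le one_pos hc'1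
  set m : ℝ := 1 - 2 * Real.exp (-(2 * c')) with hmdef
  have hσ1 : 0 < 1 - σ' := by linarith
  have hm : σ' ≤ m := by
    have hx : Real.log (2 / (1 - σ')) ≤ 2 * c' := by
      have := le_max_right 1 (Real.log (2 / (1 - σ')) / 2)
      linarith
    have hexp : Real.exp (-(2 * c')) ≤ (1 - σ') / 2 := by
      have h2 : Real.exp (Real.log (2 / (1 - σ'))) = 2 / (1 - σ') :=
        Real.exp_log (by positivity)
      calc Real.exp (-(2 * c')) ≤ Real.exp (-(Real.log (2 / (1 - σ')))) :=
            Real.exp_le_exp.2 (by linarith)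
        _ = (2 / (1 - σ'))⁻¹ := by rw [Real.exp_neg, h2]
        _ = (1 - σ') / 2 := by field_simp
    simp only [hmdef]; linarith
  refine ⟨A + 2 * c' + 1, by positivity, fun z hfin => ?_⟩
  by_contra hcon
  push_neg at hcon
  set T : ℝ := (Tmax z).toReal with hTdef
  have hT : 0 < T := ENNReal.toReal_pos (hpos z).ne' hfin.ne
  set h : ℝ → ℝ := fun t => (ψ z t).re - ξ t with hhdef
  -- blow-up gives a time t₀ where h is small
  have hretend : Filter.Tendsto (fun t => (ψ z t - (ξ t : ℂ)).re)
      (nhdsWithin T (Set.Iio T)) (nhds 0) := by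
    have := (Complex.continuous_re.tendsto 0).comp (hblow z hfin)
    simpa [Function.comp_def, hTdef] using this
  have hev1 : ∀ᶠ t in nhdsWithin T (Set.Iio T), (ψ z t - (ξ t : ℂ)).re < 2 * c' :=
    hretend.eventually_lt_const (by positivity)
  have hev2 : ∀ᶠ t in nhdsWithin T (Set.Iio T), 0 < t :=
    Filter.Eventually.filter_mono nhdsWithin_le_nhds (eventually_gt_nhds hT)
  have hev3 : ∀ᶠ t in nhdsWithin T (Set.Iio T), t < T :=
    eventually_mem_nhdsWithin
  obtain ⟨t₀, ht₀small, ht₀pos, ht₀T⟩ := (hev1.and (hev2.and hev3)).exists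
  have ht₀small' : h t₀ ≤ 2 * c' := by
    have h0 : (ψ z t₀ - (ξ t₀ : ℂ)).re = h t₀ := by simp [hhdef]
    rw [h0] at ht₀small
    linarith
  -- continuity of ψ z and h on [0, t₀]
  have hlt : ∀ t : ℝ, 0 ≤ t → t < T → ENNReal.ofReal t < Tmax z := fun t ht htT =>
    (ENNReal.ofReal_lt_iff_lt_toReal ht hfin.ne).2 htT
  have hcontψ : ContinuousOn (ψ z) (Set.Icc 0 t₀) := fun t ht =>
    ((hode z t ht.1 (hlt t ht.1 (lt_of_le_of_lt ht.2 ht₀T))).continuousAt).continuousWithinAt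
  have hconth : ContinuousOn h (Set.Icc 0 t₀) :=
    ((Complex.continuous_re.comp_continuousOn hcontψ).sub hξ.continuousOn)
  -- first time h reaches 2c'
  set S : Set ℝ := {t | t ∈ Set.Icc 0 t₀ ∧ h t ≤ 2 * c'} with hSdef
  have hSne : S.Nonempty := ⟨t₀, ⟨le_of_lt ht₀pos, le_refl _⟩, ht₀small'⟩
  have hSclosed : IsClosed S := by
    have := hconth.preimage_isClosed_of_isClosed isClosed_Icc (isClosed_Iic (a := 2 * c'))
    exact this
  have hSbdd : BddBelow S := ⟨0, fun t ht => ht.1.1⟩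
  set t₁ : ℝ := sInf S with ht₁def
  have ht₁mem : t₁ ∈ S := hSclosed.csInf_mem hSne hSbdd
  have ht₁0 : 0 ≤ t₁ := ht₁mem.1.1
  have ht₁t₀ : t₁ ≤ t₀ := ht₁mem.1.2
  have ht₁T : t₁ < T := lt_of_le_of_lt ht₁t₀ ht₀T
  -- on (0, t₁), h ≥ 2c'
  have hbig : ∀ t ∈ Set.Ioo (0:ℝ) t₁, 2 * c' ≤ h t := by
    intro t ht
    by_contra hcon2
    push_neg at hcon2
    have : t ∈ S := ⟨⟨le_of_lt ht.1, le_of_lt (lt_of_lt_of_le ht.2 ht₁t₀)⟩, le_of_lt hcon2⟩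
    exact absurd (csInf_le hSbdd this) (not_le.2 ht.2)
  -- derivative bound on the interior
  set f : ℝ → ℝ := fun t => (ψ z t).re with hfdef
  have hfderiv : ∀ t : ℝ, 0 ≤ t → t < T →
      HasDerivAt f (Complex.cosh ((ψ z t - (ξ t : ℂ)) / 2) /
        Complex.sinh ((ψ z t - (ξ t : ℂ)) / 2)).re t := fun t ht htT =>
    (Complex.reCLM.hasFDerivAt.comp_hasDerivAt t (hode z t ht (hlt t ht htT)))
  have hderivge : ∀ t ∈ interior (Set.Icc (0:ℝ) t₁), m ≤ deriv f t := by
    rw [interior_Icc]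
    intro t ht
    have htT : t < T := ht.2.trans ht₁T
    have hd := hfderiv t (le_of_lt ht.1) htT
    rw [hd.deriv]
    have hre : c' ≤ ((ψ z t - (ξ t : ℂ)) / 2).re := by
      have h2c : 2 * c' ≤ (ψ z t).re - ξ t := hbig t ht
      have heq : ((ψ z t - (ξ t : ℂ)) / 2).re = ((ψ z t).re - ξ t) / 2 := by
        simp [Complex.div_re, Complex.normSq_apply]
      rw [heq]
      linarith
    exact coth_re_ge hc'pos hre
  have hfdiff : DifferentiableOn ℝ f (interior (Set.Icc (0:ℝ) t₁)) := by
    rw [interior_Icc]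
    intro t ht
    exact ((hfderiv t (le_of_lt ht.1) (ht.2.trans ht₁T)).differentiableAt).differentiableWithinAt
  have hfcont : ContinuousOn f (Set.Icc 0 t₁) :=
    (Complex.continuous_re.comp_continuousOn hcontψ).mono (Set.Icc_subset_Icc_right ht₁t₀)
  have hmvt := (convex_Icc (0:ℝ) t₁).mul_sub_le_image_sub_of_le_deriv hfcont hfdiff hderivge
      0 (Set.left_mem_Icc.2 ht₁0) t₁ (Set.right_mem_Icc.2 ht₁0) ht₁0
  -- conclude
  have hf0 : f 0 = z.re := by simp [hfdef, hinit z]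
  have hξt₁ : ξ t₁ ≤ A + σ' * t₁ := le_trans (le_abs_self _) (hbound t₁ ht₁0)
  have hmt₁ : σ' * t₁ ≤ m * t₁ := mul_le_mul_of_nonneg_right hm ht₁0
  have hht₁ : h t₁ ≤ 2 * c' := ht₁mem.2
  have : 2 * c' + 1 ≤ h t₁ := by
    have : m * (t₁ - 0) ≤ f t₁ - f 0 := hmvt
    simp only [sub_zero, hf0] at this
    have hft₁ : z.re + m * t₁ ≤ f t₁ := by linarith
    have : h t₁ = f t₁ - ξ t₁ := rfl
    rw [this]
    have := hcon
    nlinarith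
  linarith

/-- If the driving function satisfies `|ξ(t)| ≤ A + σ' t` with `σ' < 1`, then the set of
points of the strip `S_π` swallowed by the strip Loewner chain in finite time is bounded:
it is contained in `{x + iy : -a' < x < a, 0 < y < π}` for some `a, a' > 0`. -/
theorem strip_loewner_hull_bounded
    (ξ : ℝ → ℝ) (hξ : Continuous ξ) (A σ' : ℝ) (hA : 0 < A) (hσ : σ' < 1)
    (hbound : ∀ t : ℝ, 0 ≤ t → |ξ t| ≤ A + σ' * t)
    (ψ : ℂ → ℝ → ℂ) (Tmax : ℂ → ℝ≥0∞)
    (hpos : ∀ z, 0 < Tmax z)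
    (hinit : ∀ z, ψ z 0 = z)
    (hode : ∀ z : ℂ, ∀ t : ℝ, 0 ≤ t → ENNReal.ofReal t < Tmax z →
      HasDerivAt (ψ z)
        (Complex.cosh ((ψ z t - (ξ t : ℂ)) / 2) /
          Complex.sinh ((ψ z t - (ξ t : ℂ)) / 2)) t)
    (hblow : ∀ z : ℂ, Tmax z < ⊤ →
      Filter.Tendsto (fun t => ψ z t - (ξ t : ℂ))
        (nhdsWithin (Tmax z).toReal (Set.Iio (Tmax z).toReal)) (nhds 0)) :
    ∃ a a' : ℝ, 0 < a ∧ 0 < a' ∧ ∀ z : ℂ, 0 < z.im → z.im < Real.pi →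
      Tmax z < ⊤ → -a' < z.re ∧ z.re < a := by
  obtain ⟨a, ha, hright⟩ := strip_loewner_aux ξ hξ A σ' hA hσ hbound ψ Tmax hpos hinit hode hblow
  -- reflected system
  set ξ' : ℝ → ℝ := fun t => -ξ t with hξ'def
  set ψ' : ℂ → ℝ → ℂ := fun z t => -(ψ (-z) t) with hψ'def
  set Tmax' : ℂ → ℝ≥0∞ := fun z => Tmax (-z) with hT'def
  obtain ⟨a', ha', hleft⟩ := strip_loewner_aux ξ' (hξ.neg) A σ' hA hσ
    (fun t ht => by simpa [hξ'def, abs_neg] using hbound t ht)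
    ψ' Tmax' (fun z => hpos (-z)) (fun z => by simp [hψ'def, hinit (-z)])
    (fun z t ht hT => by
      have hd := (hode (-z) t ht hT).neg
      have : -(Complex.cosh ((ψ (-z) t - (ξ t : ℂ)) / 2) /
            Complex.sinh ((ψ (-z) t - (ξ t : ℂ)) / 2))
          = Complex.cosh ((ψ' z t - (ξ' t : ℂ)) / 2) /
            Complex.sinh ((ψ' z t - (ξ' t : ℂ)) / 2) := by
        have harg : (ψ' z t - (ξ' t : ℂ)) / 2 = -((ψ (-z) t - (ξ t : ℂ)) / 2) := by
          simp [hψ'def, hξ'def]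
          ring
        rw [harg, Complex.cosh_neg, Complex.sinh_neg, div_neg]
      rw [← this]
      exact hd)
    (fun z hfin => by
      have := (hblow (-z) hfin).neg
      simp only [neg_zero, neg_sub] at this
      have heq : (fun t => -(ψ (-z) t - (ξ t : ℂ))) = fun t => ψ' z t - (ξ' t : ℂ) := by
        funext t
        simp [hψ'def, hξ'def]
        ring
      rw [← heq]
      simpa using (hblow (-z) hfin).neg)
  refine ⟨a, a', ha, ha', fun z _ _ hfin => ?_⟩
  constructor
  · have := hleft (-z) (by simpa [hT'def] using hfin)
    simp only [Complex.neg_re] at this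
    linarith
  · exact hright z hfin
end

section
/- Suppose W maps the strip S_π conformally onto S_π \ γ, where γ is a compact simple curve in S_π ∪ ℝ meeting ℝ only at its starting point, and W extends continuously to ℝ with W((−∞, c]) = (−∞, 0], W([d, ∞)) = [0, ∞) for some c < 0 < d, and W((c,d)) = γ ∩ S_π. Then for every z ∈ closure(S_π), Im W(z) ≥ Im z, with strict inequality when z ∈ S_π or z ∈ (c, d). -/
open Complex

/-- If `W` maps the strip `S_π` conformally onto `S_π \ γ` for a compact simple curve `γ`
in `S_π ∪ ℝ` meeting `ℝ` only at its starting point, extends continuously to the closed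
strip with `W((-∞,c]) = (-∞,0]`, `W([d,∞)) = [0,∞)`, `W((c,d)) = γ ∩ S_π`, maps the upper
boundary `ℝ_π` into itself and satisfies `W(z) - z` bounded, then `Im W(z) ≥ Im z` on the
closed strip, with strict inequality for `z ∈ S_π` or `z ∈ (c,d)`. -/
theorem slit_strip_map_raises_imaginary_part
    (W : ℂ → ℂ) (γ : Set ℂ) (c d : ℝ) (hc : c < 0) (hd : 0 < d)
    (S : Set ℂ) (hS : S = {z : ℂ | 0 < z.im ∧ z.im < Real.pi})
    (hγcpt : IsCompact γ) (hγ : γ ⊆ {z : ℂ | 0 ≤ z.im ∧ z.im < Real.pi})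
    (hWdiff : DifferentiableOn ℂ W S)
    (hWbij : Set.BijOn W S (S \ γ))
    (hWcont : ContinuousOn W (closure S))
    (hWleft : W '' {z : ℂ | z.im = 0 ∧ z.re ≤ c} = {z : ℂ | z.im = 0 ∧ z.re ≤ 0})
    (hWright : W '' {z : ℂ | z.im = 0 ∧ d ≤ z.re} = {z : ℂ | z.im = 0 ∧ 0 ≤ z.re})
    (hWslit : W '' {z : ℂ | z.im = 0 ∧ c < z.re ∧ z.re < d} = γ ∩ S)
    (hWtop : ∀ x : ℝ, (W ((x : ℂ) + Real.pi * Complex.I)).im = Real.pi)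
    (hWbdd : ∃ M : ℝ, ∀ z ∈ closure S, ‖W z - z‖ ≤ M) :
    ∀ z ∈ closure S,
      z.im ≤ (W z).im
      ∧ ((z ∈ S ∨ (z.im = 0 ∧ c < z.re ∧ z.re < d)) → z.im < (W z).im) := by
  obtain ⟨M, hM⟩ := hWbdd
  set f : ℂ → ℂ := fun z => Complex.exp (Complex.I * (W z - z)) with hf
  have hnorm : ∀ z : ℂ, ‖f z‖ = Real.exp (z.im - (W z).im) := by
    intro z
    simp only [hf, Complex.norm_exp, Complex.mul_re, Complex.I_re,
      Complex.I_im, Complex.sub_re, Complex.sub_im]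
    ring_nf
  -- S as a preimage
  have hSpre : S = Complex.im ⁻¹' Set.Ioo 0 Real.pi := by
    rw [hS]; ext z; simp [Set.mem_Ioo]
  have hSopen : IsOpen S := by
    rw [hSpre]; exact isOpen_Ioo.preimage Complex.continuous_im
  have hScl : closure S ⊆ {z : ℂ | 0 ≤ z.im ∧ z.im ≤ Real.pi} := by
    apply closure_minimal
    · rw [hS]; intro z hz; exact ⟨le_of_lt hz.1, le_of_lt hz.2⟩
    · have : {z : ℂ | 0 ≤ z.im ∧ z.im ≤ Real.pi} = Complex.im ⁻¹' Set.Icc 0 Real.pi := by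
        ext z; simp [Set.mem_Icc]
      rw [this]; exact isClosed_Icc.preimage Complex.continuous_im
  -- boundary values on the real line
  have hreal : ∀ z : ℂ, z.im = 0 → 0 ≤ (W z).im := by
    intro z hz
    rcases le_or_gt z.re c with h1 | h1
    · have : W z ∈ W '' {z : ℂ | z.im = 0 ∧ z.re ≤ c} := ⟨z, ⟨hz, h1⟩, rfl⟩
      rw [hWleft] at this; exact this.1.ge
    rcases le_or_gt d z.re with h2 | h2
    · have : W z ∈ W '' {z : ℂ | z.im = 0 ∧ d ≤ z.re} := ⟨z, ⟨hz, h2⟩, rfl⟩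
      rw [hWright] at this; exact this.1.ge
    · have : W z ∈ W '' {z : ℂ | z.im = 0 ∧ c < z.re ∧ z.re < d} := ⟨z, ⟨hz, h1, h2⟩, rfl⟩
      rw [hWslit, hS] at this
      exact le_of_lt this.2.1
  -- strict positivity on the slit interval
  have hslit : ∀ z : ℂ, z.im = 0 → c < z.re → z.re < d → 0 < (W z).im := by
    intro z hz h1 h2
    have : W z ∈ W '' {z : ℂ | z.im = 0 ∧ c < z.re ∧ z.re < d} := ⟨z, ⟨hz, h1, h2⟩, rfl⟩
    rw [hWslit, hS] at this
    exact this.2.1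
  have hπpos : (0 : ℝ) < Real.pi := Real.pi_pos
  -- continuity of f on closure S
  have hfcont : ContinuousOn f (closure S) :=
    ((continuousOn_const.mul (hWcont.sub continuousOn_id)).cexp)
  -- Phragmén–Lindelöf: ‖f‖ ≤ 1 on the closed strip
  have key : ∀ z ∈ closure S, ‖f z‖ ≤ 1 := by
    intro z hz
    obtain ⟨h0, hπ⟩ := hScl hz
    refine PhragmenLindelof.horizontal_strip (a := 0) (b := Real.pi) (f := f) ?_ ?_ ?_ ?_ h0 hπ
    · rw [← hSpre]
      exact ⟨((differentiableOn_const _).mul (hWdiff.sub differentiableOn_id)).cexp, hfcont⟩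
    · refine ⟨0, by simpa using div_pos hπpos hπpos, M, ?_⟩
      rw [Asymptotics.isBigO_iff]
      refine ⟨1, ?_⟩
      rw [Filter.eventually_inf_principal]
      filter_upwards with w hw
      rw [← hSpre] at hw
      have hwcl : w ∈ closure S := subset_closure hw
      have h1 : w.im - (W w).im ≤ M := by
        have := hM w hwcl
        have h2 : |(W w - w).im| ≤ ‖W w - w‖ := Complex.abs_im_le_norm _
        have : |(W w - w).im| ≤ M := h2.trans (hM w hwcl)
        have h3 := neg_le_of_abs_le this
        rw [Complex.sub_im] at h3
        linarith
      rw [hnorm]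
      have : Real.exp (w.im - (W w).im) ≤ Real.exp M := Real.exp_le_exp.2 h1
      calc Real.exp (w.im - (W w).im) ≤ Real.exp M := this
        _ ≤ 1 * ‖Real.exp (M * Real.exp (0 * |w.re|))‖ := by
            rw [one_mul, Real.norm_eq_abs, abs_of_pos (Real.exp_pos _), zero_mul,
              Real.exp_zero, mul_one]
    · intro w hw
      rw [hnorm, hw, zero_sub, Real.exp_le_one_iff]
      simpa using hreal w hw
    · intro w hw
      have hweq : w = (w.re : ℂ) + Real.pi * Complex.I := by
        apply Complex.ext <;> simp [hw]
      rw [hnorm, hw, hweq, hWtop w.re, sub_self, Real.exp_zero]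
  -- nonstrict inequality
  have hle : ∀ z ∈ closure S, z.im ≤ (W z).im := by
    intro z hz
    have := key z hz
    rw [hnorm, Real.exp_le_one_iff, sub_nonpos] at this
    exact this
  intro z hz
  refine ⟨hle z hz, ?_⟩
  rintro (hzS | ⟨h0, h1, h2⟩)
  swap
  · rw [h0]; exact hslit z h0 h1 h2
  -- strict inequality in the interior via the maximum modulus principle
  by_contra hcon
  push_neg at hcon
  have heq : (W z).im = z.im := le_antisymm hcon (hle z hz)
  have hfz : ‖f z‖ = 1 := by rw [hnorm, heq, sub_self, Real.exp_zero]
  have hpre : IsPreconnected S := by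
    have : Convex ℝ S := by
      rw [hS]
      exact (convex_halfSpace_im_gt 0).inter (convex_halfSpace_im_lt Real.pi)
    exact this.isPreconnected
  have hmax : IsMaxOn (norm ∘ f) S z := by
    intro w hw
    simp only [Function.comp_apply, Set.mem_setOf_eq, hfz]
    exact key w (subset_closure hw)
  have hconst : Set.EqOn f (Function.const ℂ (f z)) (closure S) :=
    Complex.eqOn_closure_of_isPreconnected_of_isMaxOn_norm hpre hSopen
      ⟨((differentiableOn_const _).mul (hWdiff.sub differentiableOn_id)).cexp, hfcont⟩ hzS hmax
  -- 0 is in the closure of S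
  have h0cl : (0 : ℂ) ∈ closure S := by
    have hne : (nhdsWithin (0 : ℝ) (Set.Ioo 0 Real.pi)).NeBot := by
      apply mem_closure_iff_nhdsWithin_neBot.mp
      rw [closure_Ioo (ne_of_lt hπpos)]
      exact ⟨le_refl 0, le_of_lt hπpos⟩
    have htend : Filter.Tendsto (fun t : ℝ => (t : ℂ) * Complex.I)
        (nhdsWithin (0 : ℝ) (Set.Ioo 0 Real.pi)) (nhds 0) := by
      have hcf : Continuous (fun t : ℝ => (t : ℂ) * Complex.I) :=
        Complex.continuous_ofReal.mul continuous_const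
      have h1 : Filter.Tendsto (fun t : ℝ => (t : ℂ) * Complex.I) (nhds 0) (nhds 0) := by
        simpa using hcf.tendsto (0 : ℝ)
      exact h1.mono_left nhdsWithin_le_nhds
    refine mem_closure_of_tendsto htend ?_
    filter_upwards [self_mem_nhdsWithin] with t ht
    rw [hS]
    simpa using ht
  have h0S : 0 < (W 0).im := hslit 0 (by simp) (by simpa using hc) (by simpa using hd)
  have hf0 : ‖f 0‖ < 1 := by
    rw [hnorm]
    simp only [Complex.zero_im, zero_sub]
    rw [Real.exp_lt_one_iff]
    linarith
  have := hconst h0cl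
  rw [this] at hf0
  simp only [Function.const_apply] at hf0
  rw [hfz] at hf0
  exact lt_irrefl 1 hf0
end
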